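/- Let L ⊆ L⁰([0,1], Borel, Lebesgue) be a vector space of random variables with L ⊋ L¹, closed under Y ↦ |Y|. Then there is no version-independent (law-invariant), real-valued risk measure on L satisfying monotonicity, convexity, positive homogeneity and translation equivariance. -/

import Mathlib

open MeasureTheory
open MeasureTheory Set Filter
open scoped ENNReal

namespace Stmt19

noncomputable def rot (c t : ℝ) : ℝ := if t + c < 1 then t + c else t + c - 1

lemma rot_measurable (c : ℝ) : Measurable (rot c) := by
  unfold rot
  exact Measurable.ite (measurableSet_lt (measurable_id.add_const c) measurable_const)
    (measurable_id.add_const c) ((measurable_id.add_const c).sub_const 1)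

def Sset (F : ℝ → ℝ≥0∞) (n : ℕ) (t : ℝ) : Set ℝ :=
  {y : ℝ | 0 ≤ y ∧ ((n : ℝ) ≤ y ∨ ENNReal.ofReal t ≤ F y)}

noncomputable def qn (F : ℝ → ℝ≥0∞) (n : ℕ) (t : ℝ) : ℝ := sInf (Sset F n t)

variable {F : ℝ → ℝ≥0∞} {n : ℕ} {t y : ℝ}

lemma mem_Sset_n (t : ℝ) : (n : ℝ) ∈ Sset F n t := ⟨Nat.cast_nonneg n, Or.inl le_rfl⟩

lemma Sset_bddBelow (t : ℝ) : BddBelow (Sset F n t) := ⟨0, fun _ hy => hy.1⟩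

lemma qn_nonneg (t : ℝ) : 0 ≤ qn F n t :=
  Real.sInf_nonneg (fun _ hy => hy.1)

lemma qn_le_n (t : ℝ) : qn F n t ≤ n := csInf_le (Sset_bddBelow t) (mem_Sset_n t)

lemma qn_mono : Monotone (qn F n) := by
  intro a b hab
  refine csInf_le_csInf (Sset_bddBelow a) ⟨(n : ℝ), mem_Sset_n b⟩ ?_
  rintro y ⟨h0, h⟩
  refine ⟨h0, ?_⟩
  rcases h with h | h
  · exact Or.inl h
  · exact Or.inr (le_trans (ENNReal.ofReal_le_ofReal hab) h)

lemma qn_le_of (h0 : 0 ≤ y) (h : ENNReal.ofReal t ≤ F y) : qn F n t ≤ y :=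
  csInf_le (Sset_bddBelow t) ⟨h0, Or.inr h⟩

lemma rc_cdf {μ : Measure ℝ} [IsFiniteMeasure μ] {Z : ℝ → ℝ} (hZm : Measurable Z) (y : ℝ)
    (a : ℝ≥0∞) (ha : ∀ z, y < z → a ≤ μ {ω | Z ω ≤ z}) : a ≤ μ {ω | Z ω ≤ y} := by
  set s : ℕ → Set ℝ := fun k => {ω | Z ω ≤ y + 1/(k+1)} with hs
  have hmono : Antitone s := by
    intro k l hkl ω hω
    simp only [hs, mem_setOf_eq] at *
    have h1 : (1:ℝ)/(l+1) ≤ 1/(k+1) := by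
      apply one_div_le_one_div_of_le
      · positivity
      · exact_mod_cast by omega
    linarith
  have hint : ⋂ k, s k = {ω | Z ω ≤ y} := by
    ext ω
    simp only [mem_iInter, mem_setOf_eq, hs]
    constructor
    · intro h
      have htend : Tendsto (fun k : ℕ => y + 1/((k:ℝ)+1)) atTop (nhds y) := by
        have := tendsto_one_div_add_atTop_nhds_zero_nat (𝕜 := ℝ)
        simpa using tendsto_const_nhds.add this
      exact ge_of_tendsto' htend h
    · intro h k
      have : (0:ℝ) < 1/((k:ℝ)+1) := by positivity
      linarith
  have htm := tendsto_measure_iInter_atTop (μ := μ) (s := s)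
    (fun k => (hZm measurableSet_Iic).nullMeasurableSet) hmono ⟨0, measure_ne_top μ _⟩
  rw [hint] at htm
  refine ge_of_tendsto htm (Eventually.of_forall (fun k => ha _ ?_))
  have : (0:ℝ) < 1/((k:ℝ)+1) := by positivity
  linarith

lemma le_F_of_qn_le {μ : Measure ℝ} [IsFiniteMeasure μ] {Z : ℝ → ℝ} (hZm : Measurable Z)
    (hyn : y < n) (h : qn (fun y => μ {ω | Z ω ≤ y}) n t ≤ y) :
    ENNReal.ofReal t ≤ μ {ω | Z ω ≤ y} := by
  set F : ℝ → ℝ≥0∞ := fun y => μ {ω | Z ω ≤ y} with hF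
  have hFmono : Monotone F := fun a b hab =>
    measure_mono (fun ω (hω : Z ω ≤ a) => le_trans hω hab)
  refine rc_cdf hZm y _ (fun z hz => ?_)
  have hη : 0 < min (z - y) ((n : ℝ) - y) := lt_min (by linarith) (by linarith)
  obtain ⟨y', hy', hlt⟩ := Real.lt_sInf_add_pos ⟨(n : ℝ), mem_Sset_n t⟩ hη
  have hy'lt : y' < y + min (z - y) ((n : ℝ) - y) := by
    have h2 := qn_le_n (F := F) (n := n) t
    calc y' < qn F n t + min (z - y) ((n : ℝ) - y) := hlt
    _ ≤ y + min (z - y) ((n : ℝ) - y) := by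
        have : qn F n t ≤ y := h
        linarith
  have hy'n : y' < (n : ℝ) := by
    have := min_le_right (z - y) ((n : ℝ) - y); linarith
  rcases hy'.2 with h' | h'
  · linarith
  · have hy'z : y' ≤ z := by
      have := min_le_left (z - y) ((n : ℝ) - y); linarith
    exact le_trans h' (hFmono hy'z)

lemma rot_vol (S : Set ℝ) (hS : MeasurableSet S) {c : ℝ} (hc0 : 0 ≤ c) (hc1 : c ≤ 1) :
    volume (rot c ⁻¹' S ∩ Ico 0 1) = volume (S ∩ Ico 0 1) := by
  have h1 : rot c ⁻¹' S ∩ Ico 0 1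
      = ((· + c) ⁻¹' (S ∩ Ico c 1)) ∪ ((· + (c - 1)) ⁻¹' (S ∩ Ico 0 c)) := by
    ext t
    simp only [mem_inter_iff, mem_preimage, mem_union, mem_Ico, rot]
    constructor
    · rintro ⟨ht, h0, h1'⟩
      by_cases hlt : t + c < 1
      · left
        rw [if_pos hlt] at ht
        exact ⟨ht, by linarith, hlt⟩
      · right
        rw [if_neg hlt] at ht
        push_neg at hlt
        have he : t + (c - 1) = t + c - 1 := by ring
        rw [he]
        exact ⟨ht, by linarith, by linarith⟩
    · rintro (⟨hS', hc', h1'⟩ | ⟨hS', h0', hc'⟩)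
      · have hlt : t + c < 1 := h1'
        exact ⟨by rw [if_pos hlt]; exact hS', by linarith, by linarith⟩
      · have hge : ¬ (t + c < 1) := by push_neg; linarith
        refine ⟨?_, by linarith, by linarith⟩
        rw [if_neg hge]
        have he : t + c - 1 = t + (c - 1) := by ring
        rw [he]; exact hS'
  have hd : Disjoint ((· + c) ⁻¹' (S ∩ Ico c 1)) ((· + (c - 1)) ⁻¹' (S ∩ Ico 0 c)) := by
    rw [Set.disjoint_left]
    rintro t ⟨-, -, h1'⟩ ⟨-, h0', -⟩
    simp only at *
    linarith [h0', h1']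
  rw [h1, measure_union hd (((measurable_id.add_const (c-1))) (hS.inter measurableSet_Ico)),
    measure_preimage_add_right, measure_preimage_add_right, ← measure_union, ←
    Set.inter_union_distrib_left]
  · rw [Set.union_comm, Set.Ico_union_Ico_eq_Ico hc0 hc1]
  · exact (Set.Ico_disjoint_Ico_same).symm.mono inf_le_right inf_le_right
  · exact hS.inter measurableSet_Ico

lemma cdf_rot {μ : Measure ℝ} (hμ : μ = volume.restrict (Icc (0:ℝ) 1)) {Z : ℝ → ℝ}
    (hZm : Measurable Z) (hZ0 : ∀ ω, 0 ≤ Z ω) (n : ℕ) {c : ℝ} (hc0 : 0 ≤ c) (hc1 : c ≤ 1)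
    (y : ℝ) :
    μ {t | qn (fun y => μ {ω | Z ω ≤ y}) n (rot c t) ≤ y}
      = μ {ω | min (Z ω) n ≤ y} := by
  have hprob : IsProbabilityMeasure μ := by
    constructor
    rw [hμ, Measure.restrict_apply_univ, Real.volume_Icc]
    norm_num
  set F : ℝ → ℝ≥0∞ := fun y => μ {ω | Z ω ≤ y} with hF
  by_cases hy0 : y < 0
  · have h1 : {t | qn F n (rot c t) ≤ y} = (∅ : Set ℝ) := by
      ext t; simp only [mem_setOf_eq, mem_empty_iff_false, iff_false, not_le]
      exact lt_of_lt_of_le hy0 (qn_nonneg _)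
    have h2 : {ω | min (Z ω) (n:ℝ) ≤ y} = (∅ : Set ℝ) := by
      ext ω; simp only [mem_setOf_eq, mem_empty_iff_false, iff_false, not_le]
      exact lt_of_lt_of_le hy0 (le_min (hZ0 ω) (Nat.cast_nonneg n))
    rw [h1, h2]
  by_cases hyn : (n:ℝ) ≤ y
  · have h1 : {t | qn F n (rot c t) ≤ y} = (univ : Set ℝ) := by
      ext t; simp only [mem_setOf_eq, mem_univ, iff_true]
      exact le_trans (qn_le_n _) hyn
    have h2 : {ω | min (Z ω) (n:ℝ) ≤ y} = (univ : Set ℝ) := by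
      ext ω; simp only [mem_setOf_eq, mem_univ, iff_true]
      exact le_trans (min_le_right _ _) hyn
    rw [h1, h2]
  -- main case : 0 ≤ y < n
  push_neg at hy0 hyn
  have hFy_ne : F y ≠ ⊤ := measure_ne_top μ _
  set r : ℝ := (F y).toReal with hr
  have hr0 : 0 ≤ r := ENNReal.toReal_nonneg
  have hr1 : r ≤ 1 := by
    rw [hr]
    refine ENNReal.toReal_le_of_le_ofReal (by norm_num) ?_
    simpa using prob_le_one (μ := μ) (s := {ω | Z ω ≤ y})
  set S : Set ℝ := {s | qn F n s ≤ y} with hSdef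
  have hSm : MeasurableSet S := (qn_mono (F := F) (n := n)).measurable measurableSet_Iic
  have hsub1 : Ioo 0 r ⊆ S ∩ Ico 0 1 := by
    rintro s ⟨hs0, hsr⟩
    refine ⟨?_, le_of_lt hs0, lt_of_lt_of_le hsr hr1⟩
    exact qn_le_of hy0 (ENNReal.ofReal_le_of_le_toReal (le_of_lt hsr))
  have hsub2 : S ∩ Ico 0 1 ⊆ Icc 0 r := by
    rintro s ⟨hsS, hs0, _⟩
    refine ⟨hs0, ?_⟩
    have h := le_F_of_qn_le (μ := μ) hZm hyn hsS
    calc s = (ENNReal.ofReal s).toReal := by rw [ENNReal.toReal_ofReal hs0]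
    _ ≤ r := ENNReal.toReal_mono hFy_ne h
  have hvol : volume (S ∩ Ico 0 1) = F y := by
    have hle1 : volume (Ioo 0 r) ≤ volume (S ∩ Ico 0 1) := measure_mono hsub1
    have hle2 : volume (S ∩ Ico 0 1) ≤ volume (Icc 0 r) := measure_mono hsub2
    rw [Real.volume_Ioo] at hle1
    rw [Real.volume_Icc] at hle2
    have : volume (S ∩ Ico 0 1) = ENNReal.ofReal r := by
      apply le_antisymm
      · simpa using hle2
      · simpa using hle1
    rw [this, hr, ENNReal.ofReal_toReal hFy_ne]
  have hA : MeasurableSet {t | qn F n (rot c t) ≤ y} :=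
    ((qn_mono (F := F) (n := n)).measurable.comp (rot_measurable c)) measurableSet_Iic
  have hLHS : μ {t | qn F n (rot c t) ≤ y} = volume (rot c ⁻¹' S ∩ Ico 0 1) := by
    rw [hμ, Measure.restrict_apply hA]
    have hpre : {t | qn F n (rot c t) ≤ y} = rot c ⁻¹' S := rfl
    rw [hpre]
    -- Icc vs Ico
    apply le_antisymm
    · calc volume (rot c ⁻¹' S ∩ Icc 0 1)
          ≤ volume ((rot c ⁻¹' S ∩ Ico 0 1) ∪ {1}) := by
            apply measure_mono
            rintro t ⟨htS, ht0, ht1⟩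
            rcases lt_or_eq_of_le ht1 with h | h
            · exact Or.inl ⟨htS, ht0, h⟩
            · exact Or.inr (by simp [h])
      _ ≤ volume (rot c ⁻¹' S ∩ Ico 0 1) + volume ({1} : Set ℝ) := measure_union_le _ _
      _ = volume (rot c ⁻¹' S ∩ Ico 0 1) := by simp
    · exact measure_mono (inter_subset_inter_right _ Ico_subset_Icc_self)
  have hRHS : μ {ω | min (Z ω) (n:ℝ) ≤ y} = F y := by
    have : {ω | min (Z ω) (n:ℝ) ≤ y} = {ω | Z ω ≤ y} := by
      ext ω
      simp only [mem_setOf_eq, min_le_iff]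
      constructor
      · rintro (h | h)
        · exact h
        · exact absurd h (not_le.mpr hyn)
      · exact Or.inl
    rw [this]
  rw [hLHS, hRHS, rot_vol S hSm hc0 hc1, hvol]


lemma riemann {f : ℝ → ℝ} (hmono : Monotone f) (h0 : ∀ t, 0 ≤ f t) {n : ℕ}
    (hb : ∀ t, f t ≤ (n:ℝ)) {N : ℕ} (hN : 1 ≤ N) :
    (N:ℝ) * (∫ x in (0:ℝ)..1, f x) - n ≤ ∑ j ∈ Finset.range N, f ((j:ℝ) / N) := by
  have hN0 : (0:ℝ) < N := by exact_mod_cast hN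
  have hint : ∀ a b : ℝ, IntervalIntegrable f volume a b := fun a b => hmono.intervalIntegrable
  have hadj : ∑ k ∈ Finset.range (N-1), ∫ x in ((k:ℝ)/N)..(((k:ℝ)+1)/N), f x
      = ∫ x in (0:ℝ)..(((N:ℝ)-1)/N), f x := by
    have := intervalIntegral.sum_integral_adjacent_intervals
      (a := fun k : ℕ => (k:ℝ)/N) (n := N-1) (μ := volume) (f := f) (fun k _ => hint _ _)
    simp only [Nat.cast_zero, zero_div] at this
    have hc : ((N - 1 : ℕ) : ℝ) = (N:ℝ) - 1 := by
      push_cast [Nat.cast_sub hN]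
      ring
    rw [hc] at this
    rw [← this]
    apply Finset.sum_congr rfl
    intro k _
    congr 1
    push_cast
    ring
  have heach : ∀ a b : ℝ, a ≤ b → ∀ C : ℝ, (∀ x ∈ Set.Icc a b, f x ≤ C) →
      ∫ x in a..b, f x ≤ (b - a) * C := by
    intro a b hab C hC
    have h1 : ∫ x in a..b, f x ≤ ∫ _x in a..b, C :=
      intervalIntegral.integral_mono_on hab (hint a b) intervalIntegrable_const hC
    rwa [intervalIntegral.integral_const, smul_eq_mul] at h1
  -- interval pieces ≤ (1/N) * f((k+1)/N)
  have hpiece : ∀ k : ℕ, ∫ x in ((k:ℝ)/N)..(((k:ℝ)+1)/N), f x ≤ (1/N) * f (((k:ℝ)+1)/N) := by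
    intro k
    have hab : (k:ℝ)/N ≤ ((k:ℝ)+1)/N := by gcongr; linarith
    have := heach ((k:ℝ)/N) (((k:ℝ)+1)/N) hab (f (((k:ℝ)+1)/N))
      (fun x hx => hmono hx.2)
    have harith : ((k:ℝ)+1)/N - (k:ℝ)/N = 1/N := by field_simp; ring
    rwa [harith] at this
  have htail : ∫ x in (((N:ℝ)-1)/N)..1, f x ≤ (1/N) * n := by
    have hab : ((N:ℝ)-1)/N ≤ 1 := by
      rw [div_le_one hN0]; linarith
    have := heach (((N:ℝ)-1)/N) 1 hab (n:ℝ) (fun x _ => hb x)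
    have harith : (1:ℝ) - ((N:ℝ)-1)/N = 1/N := by field_simp; ring
    rwa [harith] at this
  have hsplit : (∫ x in (0:ℝ)..(((N:ℝ)-1)/N), f x) + ∫ x in (((N:ℝ)-1)/N)..1, f x
      = ∫ x in (0:ℝ)..1, f x :=
    intervalIntegral.integral_add_adjacent_intervals (hint _ _) (hint _ _)
  have hsum1 : ∫ x in (0:ℝ)..(((N:ℝ)-1)/N), f x
      ≤ (1/N) * ∑ k ∈ Finset.range (N-1), f (((k:ℝ)+1)/N) := by
    rw [← hadj, Finset.mul_sum]
    exact Finset.sum_le_sum (fun k _ => hpiece k)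
  have hsum2 : ∑ k ∈ Finset.range (N-1), f (((k:ℝ)+1)/N) ≤ ∑ j ∈ Finset.range N, f ((j:ℝ)/N) := by
    have key : ∑ j ∈ Finset.range ((N-1)+1), f ((j:ℝ)/N)
        = (∑ k ∈ Finset.range (N-1), f ((((k+1):ℕ):ℝ)/N)) + f (((0:ℕ):ℝ)/N) :=
      Finset.sum_range_succ' _ _
    rw [show (N-1)+1 = N from by omega] at key
    have hcongr : ∑ k ∈ Finset.range (N-1), f ((((k+1):ℕ):ℝ)/N)
        = ∑ k ∈ Finset.range (N-1), f (((k:ℝ)+1)/N) := by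
      apply Finset.sum_congr rfl; intro k _; push_cast; ring_nf
    rw [hcongr] at key
    have h00 : (0:ℝ) ≤ f (((0:ℕ):ℝ)/N) := h0 _
    linarith [key]
  -- combine
  have hI : ∫ x in (0:ℝ)..1, f x ≤ (1/N) * (∑ j ∈ Finset.range N, f ((j:ℝ)/N)) + (1/N) * n := by
    have h1 : ∫ x in (0:ℝ)..(((N:ℝ)-1)/N), f x
        ≤ (1/N) * ∑ j ∈ Finset.range N, f ((j:ℝ)/N) := by
      refine le_trans hsum1 ?_
      have : (0:ℝ) ≤ 1/N := by positivity
      exact mul_le_mul_of_nonneg_left hsum2 this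
    linarith
  have h2 := mul_le_mul_of_nonneg_left hI hN0.le
  have h3 : (N:ℝ) * (1/N * (∑ j ∈ Finset.range N, f ((j:ℝ)/N)) + 1/N * n)
      = (∑ j ∈ Finset.range N, f ((j:ℝ)/N)) + n := by
    field_simp
  linarith

lemma sum_rot_ge {f : ℝ → ℝ} (hmono : Monotone f) {N : ℕ} (hN : 1 ≤ N) {ω : ℝ}
    (hω0 : 0 ≤ ω) (hω1 : ω < 1) :
    ∑ j ∈ Finset.range N, f ((j:ℝ) / N) ≤ ∑ k ∈ Finset.range N, f (rot ((k:ℝ)/N) ω) := by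
  have hN0 : (0:ℝ) < N := by exact_mod_cast hN
  set i : ℕ := ⌊ω * N⌋₊ with hi
  have hiN : i < N := by
    rw [hi]
    apply (Nat.floor_lt (by positivity)).mpr
    calc ω * N < 1 * N := by apply mul_lt_mul_of_pos_right hω1 hN0
    _ = N := one_mul _
  have hi1 : (i:ℝ) ≤ ω * N := Nat.floor_le (by positivity)
  have hi2 : ω * N < (i:ℝ) + 1 := Nat.lt_floor_add_one _
  have hiω : (i:ℝ)/N ≤ ω := by rw [div_le_iff₀ hN0]; linarith
  have hstep : ∀ k ∈ Finset.range N, f ((((i+k) % N : ℕ):ℝ)/N) ≤ f (rot ((k:ℝ)/N) ω) := by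
    intro k hk
    rw [Finset.mem_range] at hk
    rcases lt_or_ge (i+k) N with hlt | hge
    · have hmod : (i+k) % N = i + k := Nat.mod_eq_of_lt hlt
      have hc2 : ((i+k+1 : ℕ):ℝ) ≤ ((N:ℕ):ℝ) := by exact_mod_cast hlt
      push_cast at hc2
      have hcond : ω + (k:ℝ)/N < 1 := by
        rw [show ω + (k:ℝ)/N = (ω*N + k)/N from by field_simp, div_lt_one hN0]
        linarith
      rw [rot, if_pos hcond, hmod]
      apply hmono
      push_cast
      rw [add_div]
      linarith
    · have hmod : (i+k) % N = i + k - N := by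
        rw [Nat.mod_eq_sub_mod hge, Nat.mod_eq_of_lt (by omega)]
      have hgeR : ((N:ℕ):ℝ) ≤ ((i+k : ℕ):ℝ) := by exact_mod_cast hge
      push_cast at hgeR
      have hge1 : (1:ℝ) ≤ ω + (k:ℝ)/N := by
        rw [show ω + (k:ℝ)/N = (ω*N + k)/N from by field_simp, le_div_iff₀ hN0]
        linarith
      have hcond : ¬ (ω + (k:ℝ)/N < 1) := not_lt.mpr hge1
      rw [rot, if_neg hcond, hmod]
      apply hmono
      rw [Nat.cast_sub hge]
      push_cast
      rw [sub_div, add_div, div_self (ne_of_gt hN0)]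
      linarith
  have hreindex : ∑ k ∈ Finset.range N, f ((((i+k) % N : ℕ):ℝ)/N)
      = ∑ j ∈ Finset.range N, f ((j:ℝ)/N) := by
    apply Finset.sum_nbij' (i := fun k => (i+k) % N) (j := fun j => (j + (N - i)) % N)
    · intro a ha
      rw [Finset.mem_range] at *
      exact Nat.mod_lt _ (by omega)
    · intro b hb
      rw [Finset.mem_range] at *
      exact Nat.mod_lt _ (by omega)
    · intro a ha
      rw [Finset.mem_range] at ha
      rw [Nat.mod_add_mod]
      rw [show i + a + (N - i) = a + N from by omega]
      rw [Nat.add_mod_right, Nat.mod_eq_of_lt ha]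
    · intro b hb
      rw [Finset.mem_range] at hb
      rw [Nat.add_mod_mod]
      rw [show i + (b + (N - i)) = b + N from by omega]
      rw [Nat.add_mod_right, Nat.mod_eq_of_lt hb]
    · intro a _
      rfl
  calc ∑ j ∈ Finset.range N, f ((j:ℝ)/N)
      = ∑ k ∈ Finset.range N, f ((((i+k) % N : ℕ):ℝ)/N) := hreindex.symm
  _ ≤ ∑ k ∈ Finset.range N, f (rot ((k:ℝ)/N) ω) := Finset.sum_le_sum hstep
end Stmt19

open MeasureTheory Set Filter Stmt19
open scoped ENNReal

/-- on the standard probability space [0,1] with Lebesgue measure, there is no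
version-independent (law-invariant), real-valued risk measure — monotone, convex, positively
homogeneous and translation equivariant — on a vector space L of random variables that
strictly contains L¹ and is closed under absolute value. -/
theorem stmt19 (L : Submodule ℝ (ℝ → ℝ))
    (μ : Measure ℝ) (hμ : μ = volume.restrict (Set.Icc (0 : ℝ) 1))
    (hmeas : ∀ Y ∈ L, Measurable Y)
    (habs : ∀ Y ∈ L, (fun ω => |Y ω|) ∈ L)
    (hL1 : ∀ Y : ℝ → ℝ, Measurable Y → Integrable Y μ → Y ∈ L)
    (hstrict : ∃ Y ∈ L, ¬ Integrable Y μ) :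
    ¬ ∃ ρ : (ℝ → ℝ) → ℝ,
      (∀ Y₁ ∈ L, ∀ Y₂ ∈ L, (∀ᵐ ω ∂μ, Y₁ ω ≤ Y₂ ω) → ρ Y₁ ≤ ρ Y₂) ∧
      (∀ Y ∈ L, ∀ c : ℝ, 0 < c → ρ (c • Y) = c * ρ Y) ∧
      (∀ Y₀ ∈ L, ∀ Y₁ ∈ L, ∀ t : ℝ, 0 ≤ t → t ≤ 1 →
        ρ ((1 - t) • Y₀ + t • Y₁) ≤ (1 - t) * ρ Y₀ + t * ρ Y₁) ∧
      (∀ Y ∈ L, ∀ c : ℝ, ρ (fun ω => Y ω + c) = ρ Y + c) ∧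
      (∀ Y₁ ∈ L, ∀ Y₂ ∈ L,
        (∀ y : ℝ, μ {ω | Y₁ ω ≤ y} = μ {ω | Y₂ ω ≤ y}) → ρ Y₁ = ρ Y₂) := by
  rintro ⟨ρ, hρmono, hpos, hconv, htrans, hlaw⟩
  haveI hprob : IsProbabilityMeasure μ := by
    constructor
    rw [hμ, Measure.restrict_apply_univ, Real.volume_Icc]
    norm_num
  obtain ⟨Y, hYL, hYi⟩ := hstrict
  set Z : ℝ → ℝ := fun ω => |Y ω| with hZ
  have hZL : Z ∈ L := habs Y hYL
  have hZm : Measurable Z := (hmeas Y hYL).abs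
  have hZ0 : ∀ ω, 0 ≤ Z ω := fun ω => abs_nonneg _
  have hZi : ¬ Integrable Z μ := fun h =>
    hYi (h.mono' (hmeas Y hYL).aestronglyMeasurable
      (Filter.Eventually.of_forall (fun ω => by rw [Real.norm_eq_abs])))
  -- basic risk measure facts
  have hρ0 : ρ 0 = 0 := by
    have h := hpos 0 L.zero_mem 2 (by norm_num)
    rw [smul_zero] at h
    linarith
  have hρconst : ∀ c : ℝ, ρ (fun _ => c) = c := by
    intro c
    have h := htrans 0 L.zero_mem c
    simpa [hρ0] using h
  have hsubadd : ∀ f ∈ L, ∀ g ∈ L, ρ (f + g) ≤ ρ f + ρ g := by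
    intro f hf g hg
    have h2 := hpos (f + g) (L.add_mem hf hg) (1/2) (by norm_num)
    have hc := hconv f hf g hg (1/2) (by norm_num) (by norm_num)
    have he : (1 - 1/2 : ℝ) • f + (1/2 : ℝ) • g = (1/2 : ℝ) • (f + g) := by
      rw [smul_add]
      norm_num
    rw [he, h2] at hc
    linarith
  have hsumρ : ∀ (m : ℕ) (g : ℕ → ℝ → ℝ), (∀ k, g k ∈ L) →
      ρ (∑ k ∈ Finset.range m, g k) ≤ ∑ k ∈ Finset.range m, ρ (g k) := by
    intro m g hg
    induction m with
    | zero => simp [hρ0]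
    | succ m ih =>
      rw [Finset.sum_range_succ, Finset.sum_range_succ]
      have hmem : (∑ k ∈ Finset.range m, g k) ∈ L := Submodule.sum_mem L (fun k _ => hg k)
      have h := hsubadd _ hmem _ (hg m)
      linarith
  -- truncations and shortage of integrability
  set F : ℝ → ℝ≥0∞ := fun y => μ {ω | Z ω ≤ y} with hF
  set J : ℕ → ℝ≥0∞ := fun n => ∫⁻ ω, ENNReal.ofReal (min (Z ω) n) ∂μ with hJ
  have hJle : ∀ n : ℕ, J n ≤ (n : ℝ≥0∞) := by
    intro n
    rw [hJ]
    calc ∫⁻ ω, ENNReal.ofReal (min (Z ω) n) ∂μ ≤ ∫⁻ _ω, ENNReal.ofReal n ∂μ :=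
      lintegral_mono (fun ω => ENNReal.ofReal_le_ofReal (min_le_right _ _))
    _ = ENNReal.ofReal n := by rw [lintegral_const, measure_univ, mul_one]
    _ ≤ (n : ℝ≥0∞) := by
        rw [ENNReal.ofReal_natCast]
  have hJtop : ∀ n : ℕ, J n ≠ ⊤ := fun n =>
    ne_top_of_le_ne_top (ENNReal.natCast_ne_top n) (hJle n)
  have hsupJ : ⨆ n : ℕ, J n = ∫⁻ ω, ENNReal.ofReal (Z ω) ∂μ := by
    rw [hJ, ← lintegral_iSup]
    · congr 1
      funext ω
      apply le_antisymm
      · exact iSup_le fun n => ENNReal.ofReal_le_ofReal (min_le_left _ _)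
      · calc ENNReal.ofReal (Z ω)
            = ENNReal.ofReal (min (Z ω) ((⌈Z ω⌉₊ : ℕ) : ℝ)) := by
              rw [min_eq_left (Nat.le_ceil _)]
        _ ≤ ⨆ n : ℕ, ENNReal.ofReal (min (Z ω) n) :=
              le_iSup (fun n : ℕ => ENNReal.ofReal (min (Z ω) n)) ⌈Z ω⌉₊
    · intro n
      exact ENNReal.measurable_ofReal.comp (hZm.min measurable_const)
    · intro a b hab ω
      exact ENNReal.ofReal_le_ofReal (min_le_min le_rfl (by exact_mod_cast hab))
  have hZtop : ∫⁻ ω, ENNReal.ofReal (Z ω) ∂μ = ⊤ := by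
    by_contra hne
    apply hZi
    refine ⟨hZm.aestronglyMeasurable, ?_⟩
    rw [hasFiniteIntegral_iff_ofReal (Eventually.of_forall hZ0)]
    exact lt_top_iff_ne_top.mpr hne
  have hJsup : ∃ n : ℕ, ENNReal.ofReal (ρ Z + 1) < J n := by
    have h : ENNReal.ofReal (ρ Z + 1) < ⨆ n : ℕ, J n := by
      rw [hsupJ, hZtop]
      exact ENNReal.ofReal_lt_top
    exact lt_iSup_iff.mp h
  obtain ⟨n₀, hn₀⟩ := hJsup
  set N : ℕ := max n₀ 1 with hNdef
  have hN1 : 1 ≤ N := le_max_right _ _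
  have hN0 : (0:ℝ) < N := by exact_mod_cast hN1
  have hJmono : J n₀ ≤ J N :=
    lintegral_mono (fun ω => ENNReal.ofReal_le_ofReal
      (min_le_min le_rfl (by exact_mod_cast le_max_left n₀ 1)))
  have hNlt : ENNReal.ofReal (ρ Z + 1) < J N := lt_of_lt_of_le hn₀ hJmono
  -- truncated variable
  set Zn : ℝ → ℝ := fun ω => min (Z ω) (N : ℝ) with hZn
  have hZnm : Measurable Zn := hZm.min measurable_const
  have hZn0 : ∀ ω, 0 ≤ Zn ω := fun ω => le_min (hZ0 ω) (Nat.cast_nonneg N)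
  have hZnle : ∀ ω, Zn ω ≤ N := fun ω => min_le_right _ _
  have hZnint : Integrable Zn μ := by
    refine Integrable.mono' (integrable_const (N:ℝ)) hZnm.aestronglyMeasurable ?_
    refine Eventually.of_forall (fun ω => ?_)
    rw [Real.norm_eq_abs, abs_le]
    exact ⟨by linarith [hZn0 ω, hN0], hZnle ω⟩
  have hZnL : Zn ∈ L := hL1 _ hZnm hZnint
  set I : ℝ := ∫ ω, Zn ω ∂μ with hIdef
  have hIJ : I = (J N).toReal := by
    rw [hIdef, integral_eq_lintegral_of_nonneg_ae (Eventually.of_forall hZn0)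
      hZnm.aestronglyMeasurable]
  have hIlow : ρ Z + 1 < I := by
    rcases le_or_gt 0 (ρ Z + 1) with h | h
    · have := (ENNReal.toReal_lt_toReal ENNReal.ofReal_ne_top (hJtop N)).mpr hNlt
      rwa [ENNReal.toReal_ofReal h, ← hIJ] at this
    · have : (0:ℝ) ≤ I := by
        rw [hIJ]
        exact ENNReal.toReal_nonneg
      linarith
  -- quantile function
  set q : ℝ → ℝ := qn F N with hq
  have hqmono : Monotone q := qn_mono
  have hq0 : ∀ t, 0 ≤ q t := qn_nonneg
  have hqN : ∀ t, q t ≤ N := qn_le_n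
  set g : ℕ → ℝ → ℝ := fun k t => q (rot ((k:ℝ)/N) t) with hg
  have hgm : ∀ k, Measurable (g k) := fun k => hqmono.measurable.comp (rot_measurable _)
  have hgL : ∀ k, g k ∈ L := by
    intro k
    refine hL1 _ (hgm k) ?_
    refine Integrable.mono' (integrable_const (N:ℝ)) (hgm k).aestronglyMeasurable ?_
    refine Eventually.of_forall (fun ω => ?_)
    rw [Real.norm_eq_abs, abs_le]
    exact ⟨by linarith [hq0 (rot ((k:ℝ)/N) ω), hN0], hqN _⟩
  have hcdf : ∀ k ∈ Finset.range N, ∀ y : ℝ, μ {t | g k t ≤ y} = μ {ω | Zn ω ≤ y} := by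
    intro k hk y
    rw [Finset.mem_range] at hk
    exact cdf_rot hμ hZm hZ0 N (div_nonneg (Nat.cast_nonneg k) (Nat.cast_nonneg N))
      (by rw [div_le_one hN0]; exact_mod_cast hk.le) y
  have hlawk : ∀ k ∈ Finset.range N, ρ (g k) = ρ Zn := fun k hk =>
    hlaw _ (hgL k) _ hZnL (hcdf k hk)
  have hρZn : ρ Zn ≤ ρ Z :=
    hρmono Zn hZnL Z hZL (Eventually.of_forall (fun ω => min_le_left _ _))
  -- a.e. membership in [0,1)
  have hae_Ico : ∀ᵐ ω ∂μ, ω ∈ Ico (0:ℝ) 1 := by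
    rw [ae_iff]
    have hset : {a | ¬ a ∈ Ico (0:ℝ) 1} = (Ico (0:ℝ) 1)ᶜ := rfl
    rw [hset, hμ, Measure.restrict_apply (measurableSet_Ico.compl)]
    refine measure_mono_null ?_ (Real.volume_singleton (a := (1:ℝ)))
    rintro t ⟨ht1, ht2, ht3⟩
    rw [mem_compl_iff, mem_Ico, not_and_or, not_le, not_lt] at ht1
    have : t = 1 := by
      rcases ht1 with h | h
      · linarith
      · linarith
    simpa using this
  -- interval integral of q
  set I' : ℝ := ∫ x in (0:ℝ)..1, q x with hI'def
  have hrot0 : ∀ᵐ t ∂μ, q (rot 0 t) = q t := by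
    refine hae_Ico.mono (fun ω hω => ?_)
    show q (if ω + 0 < 1 then ω + 0 else ω + 0 - 1) = q ω
    rw [if_pos (by linarith [hω.2] : ω + 0 < 1), add_zero]
  have hrot0m : Measurable (fun t => q (rot 0 t)) := hqmono.measurable.comp (rot_measurable 0)
  have hmapeq : μ.map (fun t => q (rot 0 t)) = μ.map Zn := by
    haveI := Measure.isProbabilityMeasure_map (μ := μ) hrot0m.aemeasurable
    haveI := Measure.isProbabilityMeasure_map (μ := μ) hZnm.aemeasurable
    apply Measure.ext_of_Iic
    intro a
    rw [Measure.map_apply hrot0m measurableSet_Iic, Measure.map_apply hZnm measurableSet_Iic]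
    exact cdf_rot hμ hZm hZ0 N (le_refl (0:ℝ)) (zero_le_one) a
  have hI'I : I' = I := by
    have e1 : I' = ∫ t in Set.Ioc (0:ℝ) 1, q t ∂volume := by
      rw [hI'def, intervalIntegral.integral_of_le zero_le_one]
    have e2 : ∫ t, q t ∂μ = ∫ t in Set.Ioc (0:ℝ) 1, q t ∂volume := by
      rw [hμ]
      exact integral_Icc_eq_integral_Ioc
    have e3 : ∫ t, q t ∂μ = ∫ t, q (rot 0 t) ∂μ :=
      (integral_congr_ae hrot0).symm
    have e4 : ∫ t, q (rot 0 t) ∂μ = ∫ x, x ∂(μ.map (fun t => q (rot 0 t))) :=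
      (integral_map hrot0m.aemeasurable aestronglyMeasurable_id).symm
    have e5 : ∫ x, x ∂(μ.map Zn) = ∫ ω, Zn ω ∂μ :=
      integral_map hZnm.aemeasurable aestronglyMeasurable_id
    rw [e1, ← e2, e3, e4, hmapeq, e5, hIdef]
  -- the key comparison
  have hconstL : (fun _ : ℝ => (N:ℝ) * I' - N) ∈ L :=
    hL1 _ measurable_const (integrable_const _)
  have hsumL : (∑ k ∈ Finset.range N, g k) ∈ L :=
    Submodule.sum_mem L (fun k _ => hgL k)
  have hptwise : ∀ᵐ ω ∂μ, (fun _ : ℝ => (N:ℝ) * I' - N) ω ≤ (∑ k ∈ Finset.range N, g k) ω := by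
    refine hae_Ico.mono (fun ω hω => ?_)
    have hR := riemann hqmono hq0 hqN hN1
    have hS := sum_rot_ge hqmono hN1 hω.1 hω.2
    rw [Finset.sum_apply]
    calc (N:ℝ) * I' - N ≤ ∑ j ∈ Finset.range N, q ((j:ℝ)/N) := hR
    _ ≤ ∑ k ∈ Finset.range N, q (rot ((k:ℝ)/N) ω) := hS
    _ = ∑ k ∈ Finset.range N, g k ω := rfl
  have hchain : (N:ℝ) * I' - N ≤ (N:ℝ) * ρ Z := by
    have h1 : ρ (fun _ : ℝ => (N:ℝ) * I' - N) ≤ ρ (∑ k ∈ Finset.range N, g k) :=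
      hρmono _ hconstL _ hsumL hptwise
    have h2 : ρ (∑ k ∈ Finset.range N, g k) ≤ ∑ k ∈ Finset.range N, ρ (g k) :=
      hsumρ N g hgL
    have h3 : ∑ k ∈ Finset.range N, ρ (g k) = (N:ℝ) * ρ Zn := by
      rw [Finset.sum_congr rfl hlawk, Finset.sum_const, Finset.card_range, nsmul_eq_mul]
    have h4 : (N:ℝ) * ρ Zn ≤ (N:ℝ) * ρ Z := mul_le_mul_of_nonneg_left hρZn hN0.le
    rw [hρconst] at h1
    linarith
  rw [hI'I] at hchain
  have : I ≤ ρ Z + 1 := by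
    have h := hchain
    nlinarith [hN0]
  linarith
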